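/- For every vertex v₁ of V_M and every vertex w of the Moser spindle, there exist vertices v₂,…,v₇ of V_M such that the induced subgraph on {v₁,…,v₇} is isomorphic to the Moser spindle via an isomorphism sending v₁ to w. -/

import Mathlib

noncomputable def rot (θ : ℝ) (u : ℂ) : ℂ := Complex.exp (θ * Complex.I) * u
noncomputable def angA : ℝ := Real.arccos (1 / (2 * Real.sqrt 3)) - Real.pi / 6
noncomputable def angB : ℝ := angA + Real.pi / 3

def MoserSpindle : SimpleGraph (Fin 7) :=
  SimpleGraph.fromRel (fun i j => (i, j) ∈
    ([(0,1),(0,2),(1,2),(1,3),(2,3),(0,4),(0,5),(4,5),(4,6),(5,6),(3,6)] : List (Fin 7 × Fin 7)))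

noncomputable def Mset (u : ℂ) : Set ℂ :=
  {u, rot angA u, rot (-angA) u, rot angB u, rot (-angB) u,
   rot angA u - rot angB u, rot (-angA) u - rot (-angB) u}

noncomputable def VM (u : ℂ) : SimpleGraph (Submodule.span ℤ (Mset u)) :=
  SimpleGraph.fromRel (fun x y => (x : ℂ) - (y : ℂ) ∈ Mset u)


lemma hexp (t : ℝ) : Complex.exp (↑t * Complex.I) = ↑(Real.cos t) + ↑(Real.sin t) * Complex.I := by
  rw [Complex.exp_mul_I, ← Complex.ofReal_cos, ← Complex.ofReal_sin]

lemma hexpneg (t : ℝ) : Complex.exp (↑(-t) * Complex.I) = ↑(Real.cos t) - ↑(Real.sin t) * Complex.I := by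
  rw [hexp, Real.cos_neg, Real.sin_neg]; push_cast; ring

lemma nsq (x y : ℝ) : Complex.normSq (↑x + ↑y * Complex.I) = x^2 + y^2 := by
  simp [Complex.normSq_apply]; ring

lemma norm_from_nsq {z : ℂ} (h : Complex.normSq z = 1) : ‖z‖ = 1 := by
  rw [Complex.norm_def, h, Real.sqrt_one]

lemma norm_rot (t : ℝ) (u : ℂ) (hu : ‖u‖ = 1) : ‖rot t u‖ = 1 := by
  rw [rot, norm_mul, hu, mul_one, Complex.norm_exp_ofReal_mul_I]

lemma sqrt3_pos : (0:ℝ) < Real.sqrt 3 := Real.sqrt_pos.2 (by norm_num)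
lemma sqrt3_sq : Real.sqrt 3 ^ 2 = 3 := Real.sq_sqrt (by norm_num)
lemma sqrt3_gt : (1:ℝ) < Real.sqrt 3 := by nlinarith [sqrt3_pos, sqrt3_sq]

lemma cos_arccos' : Real.cos (Real.arccos (1 / (2 * Real.sqrt 3))) = 1 / (2 * Real.sqrt 3) :=
  Real.cos_arccos (le_trans (by norm_num : (-1:ℝ) ≤ 0) (by positivity))
    (by rw [div_le_one (by positivity)]; nlinarith [sqrt3_gt])

lemma sin_arccos' : Real.sin (Real.arccos (1 / (2 * Real.sqrt 3))) = Real.sqrt (11/12) := by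
  rw [Real.sin_arccos]
  congr 1
  have h := sqrt3_sq
  have := sqrt3_pos
  field_simp
  linarith [h]

lemma cos_sum : Real.cos angA + Real.cos angB = 1/2 := by
  have hB : angB = Real.arccos (1 / (2 * Real.sqrt 3)) + Real.pi / 6 := by
    rw [angB, angA]; ring
  rw [angA, hB, Real.cos_sub, Real.cos_add, Real.cos_pi_div_six, Real.sin_pi_div_six, cos_arccos']
  have h := sqrt3_sq
  have := sqrt3_pos
  field_simp
  linarith [h]

lemma cos_diff : Real.cos angA * Real.cos angB + Real.sin angA * Real.sin angB = 1/2 := by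
  rw [← Real.cos_sub]
  have h : angA - angB = -(Real.pi/3) := by rw [angB]; ring
  rw [h, Real.cos_neg, Real.cos_pi_div_three]

lemma cos_add' : Real.cos angA * Real.cos angB - Real.sin angA * Real.sin angB = -(5/6) := by
  rw [← Real.cos_add]
  have h2 : angA + angB = 2 * Real.arccos (1 / (2 * Real.sqrt 3)) := by rw [angB, angA]; ring
  rw [h2, Real.cos_two_mul, cos_arccos']
  have h := sqrt3_sq
  have := sqrt3_pos
  field_simp
  linarith [h]

lemma quarter : 1 / (2 * Real.sqrt 3) * (Real.sqrt 3 / 2) = 1/4 := by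
  have := sqrt3_pos; field_simp; ring

lemma cosA_gt : 1/2 < Real.cos angA := by
  rw [angA, Real.cos_sub, Real.cos_pi_div_six, Real.sin_pi_div_six, cos_arccos', sin_arccos', quarter]
  have h1 : Real.sqrt (11/12) ^ 2 = 11/12 := Real.sq_sqrt (by norm_num)
  have h2 : (0:ℝ) ≤ Real.sqrt (11/12) := Real.sqrt_nonneg _
  nlinarith

lemma cosA_lt : Real.cos angA < 3/4 := by
  rw [angA, Real.cos_sub, Real.cos_pi_div_six, Real.sin_pi_div_six, cos_arccos', sin_arccos', quarter]
  have h1 : Real.sqrt (11/12) ^ 2 = 11/12 := Real.sq_sqrt (by norm_num)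
  have h2 : (0:ℝ) ≤ Real.sqrt (11/12) := Real.sqrt_nonneg _
  nlinarith

lemma pyA : Real.cos angA ^ 2 + Real.sin angA ^ 2 = 1 := by
  rw [add_comm]; exact Real.sin_sq_add_cos_sq angA
lemma pyB : Real.cos angB ^ 2 + Real.sin angB ^ 2 = 1 := by
  rw [add_comm]; exact Real.sin_sq_add_cos_sq angB

lemma mem_Mset_norm {u : ℂ} (hu : ‖u‖ = 1) {z : ℂ} (hz : z ∈ Mset u) : ‖z‖ = 1 := by
  have hdAB : ‖rot angA u - rot angB u‖ = 1 := by
    have e : rot angA u - rot angB u =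
        (↑(Real.cos angA - Real.cos angB) + ↑(Real.sin angA - Real.sin angB) * Complex.I) * u := by
      simp only [rot, hexp]; push_cast; ring
    rw [e, norm_mul, hu, mul_one]
    apply norm_from_nsq
    rw [nsq]
    nlinarith [pyA, pyB, cos_diff]
  have hdAB' : ‖rot (-angA) u - rot (-angB) u‖ = 1 := by
    have e : rot (-angA) u - rot (-angB) u =
        (↑(Real.cos angA - Real.cos angB) + ↑(Real.sin angB - Real.sin angA) * Complex.I) * u := by
      simp only [rot, hexpneg]; push_cast; ring
    rw [e, norm_mul, hu, mul_one]
    apply norm_from_nsq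
    rw [nsq]
    nlinarith [pyA, pyB, cos_diff]
  simp only [Mset, Set.mem_insert_iff, Set.mem_singleton_iff] at hz
  rcases hz with h | h | h | h | h | h | h
  · rw [h]; exact hu
  · rw [h]; exact norm_rot _ _ hu
  · rw [h]; exact norm_rot _ _ hu
  · rw [h]; exact norm_rot _ _ hu
  · rw [h]; exact norm_rot _ _ hu
  · rw [h]; exact hdAB
  · rw [h]; exact hdAB'

lemma mem_Mset_ne_zero {u : ℂ} (hu : ‖u‖ = 1) {z : ℂ} (hz : z ∈ Mset u) : z ≠ 0 := by
  intro h
  have h2 := mem_Mset_norm hu hz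
  rw [h] at h2
  simp at h2

lemma zero_not_mem {u : ℂ} (hu : ‖u‖ = 1) : (0:ℂ) ∉ Mset u :=
  fun h => mem_Mset_ne_zero hu h rfl

lemma not_mem_Mset {u : ℂ} (hu : ‖u‖ = 1) {z : ℂ} (h1 : Complex.normSq z ≠ 1) :
    z * u ∉ Mset u := by
  intro hz
  apply h1
  have h2 := mem_Mset_norm hu hz
  rw [norm_mul, hu, mul_one] at h2
  rw [← Complex.sq_norm, h2]; norm_num

noncomputable def pt (u : ℂ) : Fin 7 → ℂ := fun i =>
  if i = 0 then 0 else if i = 1 then rot angA u else if i = 2 then rot angB u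
  else if i = 3 then rot angA u + rot angB u else if i = 4 then -rot (-angA) u
  else if i = 5 then -rot (-angB) u else -rot (-angA) u - rot (-angB) u

lemma edgeK {u : ℂ} (hu : ‖u‖ = 1) {i j : Fin 7} {x y : ℂ}
    (hadj : MoserSpindle.Adj i j) (hm : x - y ∈ Mset u ∨ y - x ∈ Mset u) :
    (MoserSpindle.Adj i j ↔ (x - y ∈ Mset u ∨ y - x ∈ Mset u)) ∧ (i ≠ j → x - y ≠ 0) := by
  refine ⟨iff_of_true hadj hm, fun _ h => ?_⟩
  rcases hm with hm | hm
  · exact mem_Mset_ne_zero hu hm h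
  · exact mem_Mset_ne_zero hu hm (by rw [← neg_sub, h, neg_zero])

lemma nonedgeK {u : ℂ} (hu : ‖u‖ = 1) {i j : Fin 7} {x y : ℂ} {z : ℂ}
    (hadj : ¬ MoserSpindle.Adj i j) (he : x - y = z * u)
    (h1 : Complex.normSq z ≠ 1) (h0 : Complex.normSq z ≠ 0) :
    (MoserSpindle.Adj i j ↔ (x - y ∈ Mset u ∨ y - x ∈ Mset u)) ∧ (i ≠ j → x - y ≠ 0) := by
  have hu0 : u ≠ 0 := by intro h; rw [h] at hu; simp at hu
  have hz0 : z ≠ 0 := fun h => h0 (by rw [h]; simp)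
  refine ⟨iff_of_false hadj ?_, fun _ => by rw [he]; exact mul_ne_zero hz0 hu0⟩
  rintro (hm | hm)
  · rw [he] at hm; exact not_mem_Mset hu h1 hm
  · have h3 : y - x = (-z) * u := by rw [← neg_sub, he]; ring
    rw [h3] at hm
    exact not_mem_Mset hu (by rwa [Complex.normSq_neg]) hm


lemma pt0 (u : ℂ) : pt u 0 = 0 := by simp [pt]
lemma pt1 (u : ℂ) : pt u 1 = rot angA u := by simp [pt]
lemma pt2 (u : ℂ) : pt u 2 = rot angB u := by simp [pt]
lemma pt3 (u : ℂ) : pt u 3 = rot angA u + rot angB u := by simp [pt]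
lemma pt4 (u : ℂ) : pt u 4 = -rot (-angA) u := by simp [pt]
lemma pt5 (u : ℂ) : pt u 5 = -rot (-angB) u := by simp [pt]
lemma pt6 (u : ℂ) : pt u 6 = -rot (-angA) u - rot (-angB) u := by simp [pt]

lemma keyC00 (u : ℂ) (hu : ‖u‖ = 1) :
    (MoserSpindle.Adj 0 0 ↔ (pt u 0 - pt u 0 ∈ Mset u ∨ pt u 0 - pt u 0 ∈ Mset u)) ∧
    ((0 : Fin 7) ≠ 0 → pt u 0 - pt u 0 ≠ 0) := by
  exact ⟨iff_of_false (MoserSpindle.irrefl) (by simp [sub_self]; exact zero_not_mem hu),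
    fun h => absurd rfl h⟩

lemma keyC01 (u : ℂ) (hu : ‖u‖ = 1) :
    (MoserSpindle.Adj 0 1 ↔ (pt u 0 - pt u 1 ∈ Mset u ∨ pt u 1 - pt u 0 ∈ Mset u)) ∧
    ((0 : Fin 7) ≠ 1 → pt u 0 - pt u 1 ≠ 0) := by
  have hm : pt u 1 - pt u 0 = rot angA u := by rw [pt1 u, pt0 u]; ring
  have hmm : pt u 1 - pt u 0 ∈ Mset u := by rw [hm]; simp [Mset]
  exact edgeK hu (by simp [MoserSpindle, SimpleGraph.fromRel_adj]) (Or.inr hmm)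

lemma keyC02 (u : ℂ) (hu : ‖u‖ = 1) :
    (MoserSpindle.Adj 0 2 ↔ (pt u 0 - pt u 2 ∈ Mset u ∨ pt u 2 - pt u 0 ∈ Mset u)) ∧
    ((0 : Fin 7) ≠ 2 → pt u 0 - pt u 2 ≠ 0) := by
  have hm : pt u 2 - pt u 0 = rot angB u := by rw [pt2 u, pt0 u]; ring
  have hmm : pt u 2 - pt u 0 ∈ Mset u := by rw [hm]; simp [Mset]
  exact edgeK hu (by simp [MoserSpindle, SimpleGraph.fromRel_adj]) (Or.inr hmm)

lemma keyC03 (u : ℂ) (hu : ‖u‖ = 1) :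
    (MoserSpindle.Adj 0 3 ↔ (pt u 0 - pt u 3 ∈ Mset u ∨ pt u 3 - pt u 0 ∈ Mset u)) ∧
    ((0 : Fin 7) ≠ 3 → pt u 0 - pt u 3 ≠ 0) := by
  have he : pt u 0 - pt u 3 = (((-(Real.cos angA+Real.cos angB) : ℝ) : ℂ) + ((-(Real.sin angA+Real.sin angB) : ℝ) : ℂ) * Complex.I) * u := by
    rw [pt0 u, pt3 u]; simp only [rot, hexp, Real.cos_neg, Real.sin_neg]; push_cast; ring
  exact nonedgeK hu (by simp [MoserSpindle, SimpleGraph.fromRel_adj]) he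
    (by rw [nsq]; intro h; nlinarith [pyA, pyB, cos_sum, cos_diff, cos_add', cosA_gt, cosA_lt])
    (by rw [nsq]; intro h; nlinarith [pyA, pyB, cos_sum, cos_diff, cos_add', cosA_gt, cosA_lt])

lemma keyC04 (u : ℂ) (hu : ‖u‖ = 1) :
    (MoserSpindle.Adj 0 4 ↔ (pt u 0 - pt u 4 ∈ Mset u ∨ pt u 4 - pt u 0 ∈ Mset u)) ∧
    ((0 : Fin 7) ≠ 4 → pt u 0 - pt u 4 ≠ 0) := by
  have hm : pt u 0 - pt u 4 = rot (-angA) u := by rw [pt0 u, pt4 u]; ring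
  have hmm : pt u 0 - pt u 4 ∈ Mset u := by rw [hm]; simp [Mset]
  exact edgeK hu (by simp [MoserSpindle, SimpleGraph.fromRel_adj]) (Or.inl hmm)

lemma keyC05 (u : ℂ) (hu : ‖u‖ = 1) :
    (MoserSpindle.Adj 0 5 ↔ (pt u 0 - pt u 5 ∈ Mset u ∨ pt u 5 - pt u 0 ∈ Mset u)) ∧
    ((0 : Fin 7) ≠ 5 → pt u 0 - pt u 5 ≠ 0) := by
  have hm : pt u 0 - pt u 5 = rot (-angB) u := by rw [pt0 u, pt5 u]; ring
  have hmm : pt u 0 - pt u 5 ∈ Mset u := by rw [hm]; simp [Mset]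
  exact edgeK hu (by simp [MoserSpindle, SimpleGraph.fromRel_adj]) (Or.inl hmm)

lemma keyC06 (u : ℂ) (hu : ‖u‖ = 1) :
    (MoserSpindle.Adj 0 6 ↔ (pt u 0 - pt u 6 ∈ Mset u ∨ pt u 6 - pt u 0 ∈ Mset u)) ∧
    ((0 : Fin 7) ≠ 6 → pt u 0 - pt u 6 ≠ 0) := by
  have he : pt u 0 - pt u 6 = (((Real.cos angA+Real.cos angB : ℝ) : ℂ) + ((-(Real.sin angA+Real.sin angB) : ℝ) : ℂ) * Complex.I) * u := by
    rw [pt0 u, pt6 u]; simp only [rot, hexp, Real.cos_neg, Real.sin_neg]; push_cast; ring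
  exact nonedgeK hu (by simp [MoserSpindle, SimpleGraph.fromRel_adj]) he
    (by rw [nsq]; intro h; nlinarith [pyA, pyB, cos_sum, cos_diff, cos_add', cosA_gt, cosA_lt])
    (by rw [nsq]; intro h; nlinarith [pyA, pyB, cos_sum, cos_diff, cos_add', cosA_gt, cosA_lt])

lemma keyC10 (u : ℂ) (hu : ‖u‖ = 1) :
    (MoserSpindle.Adj 1 0 ↔ (pt u 1 - pt u 0 ∈ Mset u ∨ pt u 0 - pt u 1 ∈ Mset u)) ∧
    ((1 : Fin 7) ≠ 0 → pt u 1 - pt u 0 ≠ 0) := by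
  have hm : pt u 1 - pt u 0 = rot angA u := by rw [pt1 u, pt0 u]; ring
  have hmm : pt u 1 - pt u 0 ∈ Mset u := by rw [hm]; simp [Mset]
  exact edgeK hu (by simp [MoserSpindle, SimpleGraph.fromRel_adj]) (Or.inl hmm)

lemma keyC11 (u : ℂ) (hu : ‖u‖ = 1) :
    (MoserSpindle.Adj 1 1 ↔ (pt u 1 - pt u 1 ∈ Mset u ∨ pt u 1 - pt u 1 ∈ Mset u)) ∧
    ((1 : Fin 7) ≠ 1 → pt u 1 - pt u 1 ≠ 0) := by
  exact ⟨iff_of_false (MoserSpindle.irrefl) (by simp [sub_self]; exact zero_not_mem hu),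
    fun h => absurd rfl h⟩

lemma keyC12 (u : ℂ) (hu : ‖u‖ = 1) :
    (MoserSpindle.Adj 1 2 ↔ (pt u 1 - pt u 2 ∈ Mset u ∨ pt u 2 - pt u 1 ∈ Mset u)) ∧
    ((1 : Fin 7) ≠ 2 → pt u 1 - pt u 2 ≠ 0) := by
  have hm : pt u 1 - pt u 2 = rot angA u - rot angB u := by rw [pt1 u, pt2 u]; try ring
  have hmm : pt u 1 - pt u 2 ∈ Mset u := by rw [hm]; simp [Mset]
  exact edgeK hu (by simp [MoserSpindle, SimpleGraph.fromRel_adj]) (Or.inl hmm)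

lemma keyC13 (u : ℂ) (hu : ‖u‖ = 1) :
    (MoserSpindle.Adj 1 3 ↔ (pt u 1 - pt u 3 ∈ Mset u ∨ pt u 3 - pt u 1 ∈ Mset u)) ∧
    ((1 : Fin 7) ≠ 3 → pt u 1 - pt u 3 ≠ 0) := by
  have hm : pt u 3 - pt u 1 = rot angB u := by rw [pt3 u, pt1 u]; ring
  have hmm : pt u 3 - pt u 1 ∈ Mset u := by rw [hm]; simp [Mset]
  exact edgeK hu (by simp [MoserSpindle, SimpleGraph.fromRel_adj]) (Or.inr hmm)

lemma keyC14 (u : ℂ) (hu : ‖u‖ = 1) :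
    (MoserSpindle.Adj 1 4 ↔ (pt u 1 - pt u 4 ∈ Mset u ∨ pt u 4 - pt u 1 ∈ Mset u)) ∧
    ((1 : Fin 7) ≠ 4 → pt u 1 - pt u 4 ≠ 0) := by
  have he : pt u 1 - pt u 4 = (((2*Real.cos angA : ℝ) : ℂ) + ((0 : ℝ) : ℂ) * Complex.I) * u := by
    rw [pt1 u, pt4 u]; simp only [rot, hexp, Real.cos_neg, Real.sin_neg]; push_cast; ring
  exact nonedgeK hu (by simp [MoserSpindle, SimpleGraph.fromRel_adj]) he
    (by rw [nsq]; intro h; nlinarith [pyA, pyB, cos_sum, cos_diff, cos_add', cosA_gt, cosA_lt])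
    (by rw [nsq]; intro h; nlinarith [pyA, pyB, cos_sum, cos_diff, cos_add', cosA_gt, cosA_lt])

lemma keyC15 (u : ℂ) (hu : ‖u‖ = 1) :
    (MoserSpindle.Adj 1 5 ↔ (pt u 1 - pt u 5 ∈ Mset u ∨ pt u 5 - pt u 1 ∈ Mset u)) ∧
    ((1 : Fin 7) ≠ 5 → pt u 1 - pt u 5 ≠ 0) := by
  have he : pt u 1 - pt u 5 = (((Real.cos angA+Real.cos angB : ℝ) : ℂ) + ((Real.sin angA-Real.sin angB : ℝ) : ℂ) * Complex.I) * u := by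
    rw [pt1 u, pt5 u]; simp only [rot, hexp, Real.cos_neg, Real.sin_neg]; push_cast; ring
  exact nonedgeK hu (by simp [MoserSpindle, SimpleGraph.fromRel_adj]) he
    (by rw [nsq]; intro h; nlinarith [pyA, pyB, cos_sum, cos_diff, cos_add', cosA_gt, cosA_lt])
    (by rw [nsq]; intro h; nlinarith [pyA, pyB, cos_sum, cos_diff, cos_add', cosA_gt, cosA_lt])

lemma keyC16 (u : ℂ) (hu : ‖u‖ = 1) :
    (MoserSpindle.Adj 1 6 ↔ (pt u 1 - pt u 6 ∈ Mset u ∨ pt u 6 - pt u 1 ∈ Mset u)) ∧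
    ((1 : Fin 7) ≠ 6 → pt u 1 - pt u 6 ≠ 0) := by
  have he : pt u 1 - pt u 6 = (((2*Real.cos angA+Real.cos angB : ℝ) : ℂ) + ((-Real.sin angB : ℝ) : ℂ) * Complex.I) * u := by
    rw [pt1 u, pt6 u]; simp only [rot, hexp, Real.cos_neg, Real.sin_neg]; push_cast; ring
  exact nonedgeK hu (by simp [MoserSpindle, SimpleGraph.fromRel_adj]) he
    (by rw [nsq]; intro h; nlinarith [pyA, pyB, cos_sum, cos_diff, cos_add', cosA_gt, cosA_lt])
    (by rw [nsq]; intro h; nlinarith [pyA, pyB, cos_sum, cos_diff, cos_add', cosA_gt, cosA_lt])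

lemma keyC20 (u : ℂ) (hu : ‖u‖ = 1) :
    (MoserSpindle.Adj 2 0 ↔ (pt u 2 - pt u 0 ∈ Mset u ∨ pt u 0 - pt u 2 ∈ Mset u)) ∧
    ((2 : Fin 7) ≠ 0 → pt u 2 - pt u 0 ≠ 0) := by
  have hm : pt u 2 - pt u 0 = rot angB u := by rw [pt2 u, pt0 u]; ring
  have hmm : pt u 2 - pt u 0 ∈ Mset u := by rw [hm]; simp [Mset]
  exact edgeK hu (by simp [MoserSpindle, SimpleGraph.fromRel_adj]) (Or.inl hmm)

lemma keyC21 (u : ℂ) (hu : ‖u‖ = 1) :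
    (MoserSpindle.Adj 2 1 ↔ (pt u 2 - pt u 1 ∈ Mset u ∨ pt u 1 - pt u 2 ∈ Mset u)) ∧
    ((2 : Fin 7) ≠ 1 → pt u 2 - pt u 1 ≠ 0) := by
  have hm : pt u 1 - pt u 2 = rot angA u - rot angB u := by rw [pt1 u, pt2 u]; try ring
  have hmm : pt u 1 - pt u 2 ∈ Mset u := by rw [hm]; simp [Mset]
  exact edgeK hu (by simp [MoserSpindle, SimpleGraph.fromRel_adj]) (Or.inr hmm)

lemma keyC22 (u : ℂ) (hu : ‖u‖ = 1) :
    (MoserSpindle.Adj 2 2 ↔ (pt u 2 - pt u 2 ∈ Mset u ∨ pt u 2 - pt u 2 ∈ Mset u)) ∧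
    ((2 : Fin 7) ≠ 2 → pt u 2 - pt u 2 ≠ 0) := by
  exact ⟨iff_of_false (MoserSpindle.irrefl) (by simp [sub_self]; exact zero_not_mem hu),
    fun h => absurd rfl h⟩

lemma keyC23 (u : ℂ) (hu : ‖u‖ = 1) :
    (MoserSpindle.Adj 2 3 ↔ (pt u 2 - pt u 3 ∈ Mset u ∨ pt u 3 - pt u 2 ∈ Mset u)) ∧
    ((2 : Fin 7) ≠ 3 → pt u 2 - pt u 3 ≠ 0) := by
  have hm : pt u 3 - pt u 2 = rot angA u := by rw [pt3 u, pt2 u]; ring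
  have hmm : pt u 3 - pt u 2 ∈ Mset u := by rw [hm]; simp [Mset]
  exact edgeK hu (by simp [MoserSpindle, SimpleGraph.fromRel_adj]) (Or.inr hmm)

lemma keyC24 (u : ℂ) (hu : ‖u‖ = 1) :
    (MoserSpindle.Adj 2 4 ↔ (pt u 2 - pt u 4 ∈ Mset u ∨ pt u 4 - pt u 2 ∈ Mset u)) ∧
    ((2 : Fin 7) ≠ 4 → pt u 2 - pt u 4 ≠ 0) := by
  have he : pt u 2 - pt u 4 = (((Real.cos angA+Real.cos angB : ℝ) : ℂ) + ((Real.sin angB-Real.sin angA : ℝ) : ℂ) * Complex.I) * u := by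
    rw [pt2 u, pt4 u]; simp only [rot, hexp, Real.cos_neg, Real.sin_neg]; push_cast; ring
  exact nonedgeK hu (by simp [MoserSpindle, SimpleGraph.fromRel_adj]) he
    (by rw [nsq]; intro h; nlinarith [pyA, pyB, cos_sum, cos_diff, cos_add', cosA_gt, cosA_lt])
    (by rw [nsq]; intro h; nlinarith [pyA, pyB, cos_sum, cos_diff, cos_add', cosA_gt, cosA_lt])

lemma keyC25 (u : ℂ) (hu : ‖u‖ = 1) :
    (MoserSpindle.Adj 2 5 ↔ (pt u 2 - pt u 5 ∈ Mset u ∨ pt u 5 - pt u 2 ∈ Mset u)) ∧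
    ((2 : Fin 7) ≠ 5 → pt u 2 - pt u 5 ≠ 0) := by
  have he : pt u 2 - pt u 5 = (((2*Real.cos angB : ℝ) : ℂ) + ((0 : ℝ) : ℂ) * Complex.I) * u := by
    rw [pt2 u, pt5 u]; simp only [rot, hexp, Real.cos_neg, Real.sin_neg]; push_cast; ring
  exact nonedgeK hu (by simp [MoserSpindle, SimpleGraph.fromRel_adj]) he
    (by rw [nsq]; intro h; nlinarith [pyA, pyB, cos_sum, cos_diff, cos_add', cosA_gt, cosA_lt])
    (by rw [nsq]; intro h; nlinarith [pyA, pyB, cos_sum, cos_diff, cos_add', cosA_gt, cosA_lt])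

lemma keyC26 (u : ℂ) (hu : ‖u‖ = 1) :
    (MoserSpindle.Adj 2 6 ↔ (pt u 2 - pt u 6 ∈ Mset u ∨ pt u 6 - pt u 2 ∈ Mset u)) ∧
    ((2 : Fin 7) ≠ 6 → pt u 2 - pt u 6 ≠ 0) := by
  have he : pt u 2 - pt u 6 = (((Real.cos angA+2*Real.cos angB : ℝ) : ℂ) + ((-Real.sin angA : ℝ) : ℂ) * Complex.I) * u := by
    rw [pt2 u, pt6 u]; simp only [rot, hexp, Real.cos_neg, Real.sin_neg]; push_cast; ring
  exact nonedgeK hu (by simp [MoserSpindle, SimpleGraph.fromRel_adj]) he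
    (by rw [nsq]; intro h; nlinarith [pyA, pyB, cos_sum, cos_diff, cos_add', cosA_gt, cosA_lt])
    (by rw [nsq]; intro h; nlinarith [pyA, pyB, cos_sum, cos_diff, cos_add', cosA_gt, cosA_lt])

lemma keyC30 (u : ℂ) (hu : ‖u‖ = 1) :
    (MoserSpindle.Adj 3 0 ↔ (pt u 3 - pt u 0 ∈ Mset u ∨ pt u 0 - pt u 3 ∈ Mset u)) ∧
    ((3 : Fin 7) ≠ 0 → pt u 3 - pt u 0 ≠ 0) := by
  have he : pt u 3 - pt u 0 = (((-(-(Real.cos angA+Real.cos angB)) : ℝ) : ℂ) + ((-(-(Real.sin angA+Real.sin angB)) : ℝ) : ℂ) * Complex.I) * u := by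
    rw [pt3 u, pt0 u]; simp only [rot, hexp, Real.cos_neg, Real.sin_neg]; push_cast; ring
  exact nonedgeK hu (by simp [MoserSpindle, SimpleGraph.fromRel_adj]) he
    (by rw [nsq]; intro h; nlinarith [pyA, pyB, cos_sum, cos_diff, cos_add', cosA_gt, cosA_lt])
    (by rw [nsq]; intro h; nlinarith [pyA, pyB, cos_sum, cos_diff, cos_add', cosA_gt, cosA_lt])

lemma keyC31 (u : ℂ) (hu : ‖u‖ = 1) :
    (MoserSpindle.Adj 3 1 ↔ (pt u 3 - pt u 1 ∈ Mset u ∨ pt u 1 - pt u 3 ∈ Mset u)) ∧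
    ((3 : Fin 7) ≠ 1 → pt u 3 - pt u 1 ≠ 0) := by
  have hm : pt u 3 - pt u 1 = rot angB u := by rw [pt3 u, pt1 u]; ring
  have hmm : pt u 3 - pt u 1 ∈ Mset u := by rw [hm]; simp [Mset]
  exact edgeK hu (by simp [MoserSpindle, SimpleGraph.fromRel_adj]) (Or.inl hmm)

lemma keyC32 (u : ℂ) (hu : ‖u‖ = 1) :
    (MoserSpindle.Adj 3 2 ↔ (pt u 3 - pt u 2 ∈ Mset u ∨ pt u 2 - pt u 3 ∈ Mset u)) ∧
    ((3 : Fin 7) ≠ 2 → pt u 3 - pt u 2 ≠ 0) := by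
  have hm : pt u 3 - pt u 2 = rot angA u := by rw [pt3 u, pt2 u]; ring
  have hmm : pt u 3 - pt u 2 ∈ Mset u := by rw [hm]; simp [Mset]
  exact edgeK hu (by simp [MoserSpindle, SimpleGraph.fromRel_adj]) (Or.inl hmm)

lemma keyC33 (u : ℂ) (hu : ‖u‖ = 1) :
    (MoserSpindle.Adj 3 3 ↔ (pt u 3 - pt u 3 ∈ Mset u ∨ pt u 3 - pt u 3 ∈ Mset u)) ∧
    ((3 : Fin 7) ≠ 3 → pt u 3 - pt u 3 ≠ 0) := by
  exact ⟨iff_of_false (MoserSpindle.irrefl) (by simp [sub_self]; exact zero_not_mem hu),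
    fun h => absurd rfl h⟩

lemma keyC34 (u : ℂ) (hu : ‖u‖ = 1) :
    (MoserSpindle.Adj 3 4 ↔ (pt u 3 - pt u 4 ∈ Mset u ∨ pt u 4 - pt u 3 ∈ Mset u)) ∧
    ((3 : Fin 7) ≠ 4 → pt u 3 - pt u 4 ≠ 0) := by
  have he : pt u 3 - pt u 4 = (((2*Real.cos angA+Real.cos angB : ℝ) : ℂ) + ((Real.sin angB : ℝ) : ℂ) * Complex.I) * u := by
    rw [pt3 u, pt4 u]; simp only [rot, hexp, Real.cos_neg, Real.sin_neg]; push_cast; ring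
  exact nonedgeK hu (by simp [MoserSpindle, SimpleGraph.fromRel_adj]) he
    (by rw [nsq]; intro h; nlinarith [pyA, pyB, cos_sum, cos_diff, cos_add', cosA_gt, cosA_lt])
    (by rw [nsq]; intro h; nlinarith [pyA, pyB, cos_sum, cos_diff, cos_add', cosA_gt, cosA_lt])

lemma keyC35 (u : ℂ) (hu : ‖u‖ = 1) :
    (MoserSpindle.Adj 3 5 ↔ (pt u 3 - pt u 5 ∈ Mset u ∨ pt u 5 - pt u 3 ∈ Mset u)) ∧
    ((3 : Fin 7) ≠ 5 → pt u 3 - pt u 5 ≠ 0) := by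
  have he : pt u 3 - pt u 5 = (((Real.cos angA+2*Real.cos angB : ℝ) : ℂ) + ((Real.sin angA : ℝ) : ℂ) * Complex.I) * u := by
    rw [pt3 u, pt5 u]; simp only [rot, hexp, Real.cos_neg, Real.sin_neg]; push_cast; ring
  exact nonedgeK hu (by simp [MoserSpindle, SimpleGraph.fromRel_adj]) he
    (by rw [nsq]; intro h; nlinarith [pyA, pyB, cos_sum, cos_diff, cos_add', cosA_gt, cosA_lt])
    (by rw [nsq]; intro h; nlinarith [pyA, pyB, cos_sum, cos_diff, cos_add', cosA_gt, cosA_lt])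

lemma keyC36 (u : ℂ) (hu : ‖u‖ = 1) :
    (MoserSpindle.Adj 3 6 ↔ (pt u 3 - pt u 6 ∈ Mset u ∨ pt u 6 - pt u 3 ∈ Mset u)) ∧
    ((3 : Fin 7) ≠ 6 → pt u 3 - pt u 6 ≠ 0) := by
  have hm : pt u 3 - pt u 6 = ((2*(Real.cos angA + Real.cos angB) : ℝ) : ℂ) * u := by
    rw [pt3 u, pt6 u]; simp only [rot, hexp, Real.cos_neg, Real.sin_neg]; push_cast; ring
  rw [cos_sum] at hm; norm_num at hm
  have hmm : pt u 3 - pt u 6 ∈ Mset u := by rw [hm]; simp [Mset]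
  exact edgeK hu (by simp [MoserSpindle, SimpleGraph.fromRel_adj]) (Or.inl hmm)

lemma keyC40 (u : ℂ) (hu : ‖u‖ = 1) :
    (MoserSpindle.Adj 4 0 ↔ (pt u 4 - pt u 0 ∈ Mset u ∨ pt u 0 - pt u 4 ∈ Mset u)) ∧
    ((4 : Fin 7) ≠ 0 → pt u 4 - pt u 0 ≠ 0) := by
  have hm : pt u 0 - pt u 4 = rot (-angA) u := by rw [pt0 u, pt4 u]; ring
  have hmm : pt u 0 - pt u 4 ∈ Mset u := by rw [hm]; simp [Mset]
  exact edgeK hu (by simp [MoserSpindle, SimpleGraph.fromRel_adj]) (Or.inr hmm)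

lemma keyC41 (u : ℂ) (hu : ‖u‖ = 1) :
    (MoserSpindle.Adj 4 1 ↔ (pt u 4 - pt u 1 ∈ Mset u ∨ pt u 1 - pt u 4 ∈ Mset u)) ∧
    ((4 : Fin 7) ≠ 1 → pt u 4 - pt u 1 ≠ 0) := by
  have he : pt u 4 - pt u 1 = (((-(2*Real.cos angA) : ℝ) : ℂ) + ((-(0) : ℝ) : ℂ) * Complex.I) * u := by
    rw [pt4 u, pt1 u]; simp only [rot, hexp, Real.cos_neg, Real.sin_neg]; push_cast; ring
  exact nonedgeK hu (by simp [MoserSpindle, SimpleGraph.fromRel_adj]) he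
    (by rw [nsq]; intro h; nlinarith [pyA, pyB, cos_sum, cos_diff, cos_add', cosA_gt, cosA_lt])
    (by rw [nsq]; intro h; nlinarith [pyA, pyB, cos_sum, cos_diff, cos_add', cosA_gt, cosA_lt])

lemma keyC42 (u : ℂ) (hu : ‖u‖ = 1) :
    (MoserSpindle.Adj 4 2 ↔ (pt u 4 - pt u 2 ∈ Mset u ∨ pt u 2 - pt u 4 ∈ Mset u)) ∧
    ((4 : Fin 7) ≠ 2 → pt u 4 - pt u 2 ≠ 0) := by
  have he : pt u 4 - pt u 2 = (((-(Real.cos angA+Real.cos angB) : ℝ) : ℂ) + ((-(Real.sin angB-Real.sin angA) : ℝ) : ℂ) * Complex.I) * u := by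
    rw [pt4 u, pt2 u]; simp only [rot, hexp, Real.cos_neg, Real.sin_neg]; push_cast; ring
  exact nonedgeK hu (by simp [MoserSpindle, SimpleGraph.fromRel_adj]) he
    (by rw [nsq]; intro h; nlinarith [pyA, pyB, cos_sum, cos_diff, cos_add', cosA_gt, cosA_lt])
    (by rw [nsq]; intro h; nlinarith [pyA, pyB, cos_sum, cos_diff, cos_add', cosA_gt, cosA_lt])

lemma keyC43 (u : ℂ) (hu : ‖u‖ = 1) :
    (MoserSpindle.Adj 4 3 ↔ (pt u 4 - pt u 3 ∈ Mset u ∨ pt u 3 - pt u 4 ∈ Mset u)) ∧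
    ((4 : Fin 7) ≠ 3 → pt u 4 - pt u 3 ≠ 0) := by
  have he : pt u 4 - pt u 3 = (((-(2*Real.cos angA+Real.cos angB) : ℝ) : ℂ) + ((-(Real.sin angB) : ℝ) : ℂ) * Complex.I) * u := by
    rw [pt4 u, pt3 u]; simp only [rot, hexp, Real.cos_neg, Real.sin_neg]; push_cast; ring
  exact nonedgeK hu (by simp [MoserSpindle, SimpleGraph.fromRel_adj]) he
    (by rw [nsq]; intro h; nlinarith [pyA, pyB, cos_sum, cos_diff, cos_add', cosA_gt, cosA_lt])
    (by rw [nsq]; intro h; nlinarith [pyA, pyB, cos_sum, cos_diff, cos_add', cosA_gt, cosA_lt])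

lemma keyC44 (u : ℂ) (hu : ‖u‖ = 1) :
    (MoserSpindle.Adj 4 4 ↔ (pt u 4 - pt u 4 ∈ Mset u ∨ pt u 4 - pt u 4 ∈ Mset u)) ∧
    ((4 : Fin 7) ≠ 4 → pt u 4 - pt u 4 ≠ 0) := by
  exact ⟨iff_of_false (MoserSpindle.irrefl) (by simp [sub_self]; exact zero_not_mem hu),
    fun h => absurd rfl h⟩

lemma keyC45 (u : ℂ) (hu : ‖u‖ = 1) :
    (MoserSpindle.Adj 4 5 ↔ (pt u 4 - pt u 5 ∈ Mset u ∨ pt u 5 - pt u 4 ∈ Mset u)) ∧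
    ((4 : Fin 7) ≠ 5 → pt u 4 - pt u 5 ≠ 0) := by
  have hm : pt u 5 - pt u 4 = rot (-angA) u - rot (-angB) u := by rw [pt5 u, pt4 u]; ring
  have hmm : pt u 5 - pt u 4 ∈ Mset u := by rw [hm]; simp [Mset]
  exact edgeK hu (by simp [MoserSpindle, SimpleGraph.fromRel_adj]) (Or.inr hmm)

lemma keyC46 (u : ℂ) (hu : ‖u‖ = 1) :
    (MoserSpindle.Adj 4 6 ↔ (pt u 4 - pt u 6 ∈ Mset u ∨ pt u 6 - pt u 4 ∈ Mset u)) ∧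
    ((4 : Fin 7) ≠ 6 → pt u 4 - pt u 6 ≠ 0) := by
  have hm : pt u 4 - pt u 6 = rot (-angB) u := by rw [pt4 u, pt6 u]; ring
  have hmm : pt u 4 - pt u 6 ∈ Mset u := by rw [hm]; simp [Mset]
  exact edgeK hu (by simp [MoserSpindle, SimpleGraph.fromRel_adj]) (Or.inl hmm)

lemma keyC50 (u : ℂ) (hu : ‖u‖ = 1) :
    (MoserSpindle.Adj 5 0 ↔ (pt u 5 - pt u 0 ∈ Mset u ∨ pt u 0 - pt u 5 ∈ Mset u)) ∧
    ((5 : Fin 7) ≠ 0 → pt u 5 - pt u 0 ≠ 0) := by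
  have hm : pt u 0 - pt u 5 = rot (-angB) u := by rw [pt0 u, pt5 u]; ring
  have hmm : pt u 0 - pt u 5 ∈ Mset u := by rw [hm]; simp [Mset]
  exact edgeK hu (by simp [MoserSpindle, SimpleGraph.fromRel_adj]) (Or.inr hmm)

lemma keyC51 (u : ℂ) (hu : ‖u‖ = 1) :
    (MoserSpindle.Adj 5 1 ↔ (pt u 5 - pt u 1 ∈ Mset u ∨ pt u 1 - pt u 5 ∈ Mset u)) ∧
    ((5 : Fin 7) ≠ 1 → pt u 5 - pt u 1 ≠ 0) := by
  have he : pt u 5 - pt u 1 = (((-(Real.cos angA+Real.cos angB) : ℝ) : ℂ) + ((-(Real.sin angA-Real.sin angB) : ℝ) : ℂ) * Complex.I) * u := by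
    rw [pt5 u, pt1 u]; simp only [rot, hexp, Real.cos_neg, Real.sin_neg]; push_cast; ring
  exact nonedgeK hu (by simp [MoserSpindle, SimpleGraph.fromRel_adj]) he
    (by rw [nsq]; intro h; nlinarith [pyA, pyB, cos_sum, cos_diff, cos_add', cosA_gt, cosA_lt])
    (by rw [nsq]; intro h; nlinarith [pyA, pyB, cos_sum, cos_diff, cos_add', cosA_gt, cosA_lt])

lemma keyC52 (u : ℂ) (hu : ‖u‖ = 1) :
    (MoserSpindle.Adj 5 2 ↔ (pt u 5 - pt u 2 ∈ Mset u ∨ pt u 2 - pt u 5 ∈ Mset u)) ∧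
    ((5 : Fin 7) ≠ 2 → pt u 5 - pt u 2 ≠ 0) := by
  have he : pt u 5 - pt u 2 = (((-(2*Real.cos angB) : ℝ) : ℂ) + ((-(0) : ℝ) : ℂ) * Complex.I) * u := by
    rw [pt5 u, pt2 u]; simp only [rot, hexp, Real.cos_neg, Real.sin_neg]; push_cast; ring
  exact nonedgeK hu (by simp [MoserSpindle, SimpleGraph.fromRel_adj]) he
    (by rw [nsq]; intro h; nlinarith [pyA, pyB, cos_sum, cos_diff, cos_add', cosA_gt, cosA_lt])
    (by rw [nsq]; intro h; nlinarith [pyA, pyB, cos_sum, cos_diff, cos_add', cosA_gt, cosA_lt])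

lemma keyC53 (u : ℂ) (hu : ‖u‖ = 1) :
    (MoserSpindle.Adj 5 3 ↔ (pt u 5 - pt u 3 ∈ Mset u ∨ pt u 3 - pt u 5 ∈ Mset u)) ∧
    ((5 : Fin 7) ≠ 3 → pt u 5 - pt u 3 ≠ 0) := by
  have he : pt u 5 - pt u 3 = (((-(Real.cos angA+2*Real.cos angB) : ℝ) : ℂ) + ((-(Real.sin angA) : ℝ) : ℂ) * Complex.I) * u := by
    rw [pt5 u, pt3 u]; simp only [rot, hexp, Real.cos_neg, Real.sin_neg]; push_cast; ring
  exact nonedgeK hu (by simp [MoserSpindle, SimpleGraph.fromRel_adj]) he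
    (by rw [nsq]; intro h; nlinarith [pyA, pyB, cos_sum, cos_diff, cos_add', cosA_gt, cosA_lt])
    (by rw [nsq]; intro h; nlinarith [pyA, pyB, cos_sum, cos_diff, cos_add', cosA_gt, cosA_lt])

lemma keyC54 (u : ℂ) (hu : ‖u‖ = 1) :
    (MoserSpindle.Adj 5 4 ↔ (pt u 5 - pt u 4 ∈ Mset u ∨ pt u 4 - pt u 5 ∈ Mset u)) ∧
    ((5 : Fin 7) ≠ 4 → pt u 5 - pt u 4 ≠ 0) := by
  have hm : pt u 5 - pt u 4 = rot (-angA) u - rot (-angB) u := by rw [pt5 u, pt4 u]; ring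
  have hmm : pt u 5 - pt u 4 ∈ Mset u := by rw [hm]; simp [Mset]
  exact edgeK hu (by simp [MoserSpindle, SimpleGraph.fromRel_adj]) (Or.inl hmm)

lemma keyC55 (u : ℂ) (hu : ‖u‖ = 1) :
    (MoserSpindle.Adj 5 5 ↔ (pt u 5 - pt u 5 ∈ Mset u ∨ pt u 5 - pt u 5 ∈ Mset u)) ∧
    ((5 : Fin 7) ≠ 5 → pt u 5 - pt u 5 ≠ 0) := by
  exact ⟨iff_of_false (MoserSpindle.irrefl) (by simp [sub_self]; exact zero_not_mem hu),
    fun h => absurd rfl h⟩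

lemma keyC56 (u : ℂ) (hu : ‖u‖ = 1) :
    (MoserSpindle.Adj 5 6 ↔ (pt u 5 - pt u 6 ∈ Mset u ∨ pt u 6 - pt u 5 ∈ Mset u)) ∧
    ((5 : Fin 7) ≠ 6 → pt u 5 - pt u 6 ≠ 0) := by
  have hm : pt u 5 - pt u 6 = rot (-angA) u := by rw [pt5 u, pt6 u]; ring
  have hmm : pt u 5 - pt u 6 ∈ Mset u := by rw [hm]; simp [Mset]
  exact edgeK hu (by simp [MoserSpindle, SimpleGraph.fromRel_adj]) (Or.inl hmm)

lemma keyC60 (u : ℂ) (hu : ‖u‖ = 1) :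
    (MoserSpindle.Adj 6 0 ↔ (pt u 6 - pt u 0 ∈ Mset u ∨ pt u 0 - pt u 6 ∈ Mset u)) ∧
    ((6 : Fin 7) ≠ 0 → pt u 6 - pt u 0 ≠ 0) := by
  have he : pt u 6 - pt u 0 = (((-(Real.cos angA+Real.cos angB) : ℝ) : ℂ) + ((-(-(Real.sin angA+Real.sin angB)) : ℝ) : ℂ) * Complex.I) * u := by
    rw [pt6 u, pt0 u]; simp only [rot, hexp, Real.cos_neg, Real.sin_neg]; push_cast; ring
  exact nonedgeK hu (by simp [MoserSpindle, SimpleGraph.fromRel_adj]) he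
    (by rw [nsq]; intro h; nlinarith [pyA, pyB, cos_sum, cos_diff, cos_add', cosA_gt, cosA_lt])
    (by rw [nsq]; intro h; nlinarith [pyA, pyB, cos_sum, cos_diff, cos_add', cosA_gt, cosA_lt])

lemma keyC61 (u : ℂ) (hu : ‖u‖ = 1) :
    (MoserSpindle.Adj 6 1 ↔ (pt u 6 - pt u 1 ∈ Mset u ∨ pt u 1 - pt u 6 ∈ Mset u)) ∧
    ((6 : Fin 7) ≠ 1 → pt u 6 - pt u 1 ≠ 0) := by
  have he : pt u 6 - pt u 1 = (((-(2*Real.cos angA+Real.cos angB) : ℝ) : ℂ) + ((-(-Real.sin angB) : ℝ) : ℂ) * Complex.I) * u := by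
    rw [pt6 u, pt1 u]; simp only [rot, hexp, Real.cos_neg, Real.sin_neg]; push_cast; ring
  exact nonedgeK hu (by simp [MoserSpindle, SimpleGraph.fromRel_adj]) he
    (by rw [nsq]; intro h; nlinarith [pyA, pyB, cos_sum, cos_diff, cos_add', cosA_gt, cosA_lt])
    (by rw [nsq]; intro h; nlinarith [pyA, pyB, cos_sum, cos_diff, cos_add', cosA_gt, cosA_lt])

lemma keyC62 (u : ℂ) (hu : ‖u‖ = 1) :
    (MoserSpindle.Adj 6 2 ↔ (pt u 6 - pt u 2 ∈ Mset u ∨ pt u 2 - pt u 6 ∈ Mset u)) ∧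
    ((6 : Fin 7) ≠ 2 → pt u 6 - pt u 2 ≠ 0) := by
  have he : pt u 6 - pt u 2 = (((-(Real.cos angA+2*Real.cos angB) : ℝ) : ℂ) + ((-(-Real.sin angA) : ℝ) : ℂ) * Complex.I) * u := by
    rw [pt6 u, pt2 u]; simp only [rot, hexp, Real.cos_neg, Real.sin_neg]; push_cast; ring
  exact nonedgeK hu (by simp [MoserSpindle, SimpleGraph.fromRel_adj]) he
    (by rw [nsq]; intro h; nlinarith [pyA, pyB, cos_sum, cos_diff, cos_add', cosA_gt, cosA_lt])
    (by rw [nsq]; intro h; nlinarith [pyA, pyB, cos_sum, cos_diff, cos_add', cosA_gt, cosA_lt])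

lemma keyC63 (u : ℂ) (hu : ‖u‖ = 1) :
    (MoserSpindle.Adj 6 3 ↔ (pt u 6 - pt u 3 ∈ Mset u ∨ pt u 3 - pt u 6 ∈ Mset u)) ∧
    ((6 : Fin 7) ≠ 3 → pt u 6 - pt u 3 ≠ 0) := by
  have hm : pt u 3 - pt u 6 = ((2*(Real.cos angA + Real.cos angB) : ℝ) : ℂ) * u := by
    rw [pt3 u, pt6 u]; simp only [rot, hexp, Real.cos_neg, Real.sin_neg]; push_cast; ring
  rw [cos_sum] at hm; norm_num at hm
  have hmm : pt u 3 - pt u 6 ∈ Mset u := by rw [hm]; simp [Mset]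
  exact edgeK hu (by simp [MoserSpindle, SimpleGraph.fromRel_adj]) (Or.inr hmm)

lemma keyC64 (u : ℂ) (hu : ‖u‖ = 1) :
    (MoserSpindle.Adj 6 4 ↔ (pt u 6 - pt u 4 ∈ Mset u ∨ pt u 4 - pt u 6 ∈ Mset u)) ∧
    ((6 : Fin 7) ≠ 4 → pt u 6 - pt u 4 ≠ 0) := by
  have hm : pt u 4 - pt u 6 = rot (-angB) u := by rw [pt4 u, pt6 u]; ring
  have hmm : pt u 4 - pt u 6 ∈ Mset u := by rw [hm]; simp [Mset]
  exact edgeK hu (by simp [MoserSpindle, SimpleGraph.fromRel_adj]) (Or.inr hmm)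

lemma keyC65 (u : ℂ) (hu : ‖u‖ = 1) :
    (MoserSpindle.Adj 6 5 ↔ (pt u 6 - pt u 5 ∈ Mset u ∨ pt u 5 - pt u 6 ∈ Mset u)) ∧
    ((6 : Fin 7) ≠ 5 → pt u 6 - pt u 5 ≠ 0) := by
  have hm : pt u 5 - pt u 6 = rot (-angA) u := by rw [pt5 u, pt6 u]; ring
  have hmm : pt u 5 - pt u 6 ∈ Mset u := by rw [hm]; simp [Mset]
  exact edgeK hu (by simp [MoserSpindle, SimpleGraph.fromRel_adj]) (Or.inr hmm)

lemma keyC66 (u : ℂ) (hu : ‖u‖ = 1) :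
    (MoserSpindle.Adj 6 6 ↔ (pt u 6 - pt u 6 ∈ Mset u ∨ pt u 6 - pt u 6 ∈ Mset u)) ∧
    ((6 : Fin 7) ≠ 6 → pt u 6 - pt u 6 ≠ 0) := by
  exact ⟨iff_of_false (MoserSpindle.irrefl) (by simp [sub_self]; exact zero_not_mem hu),
    fun h => absurd rfl h⟩

set_option maxHeartbeats 1000000 in
lemma key (u : ℂ) (hu : ‖u‖ = 1) (i j : Fin 7) :
    (MoserSpindle.Adj i j ↔ (pt u i - pt u j ∈ Mset u ∨ pt u j - pt u i ∈ Mset u)) ∧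
    (i ≠ j → pt u i - pt u j ≠ 0) := by
  fin_cases i <;> fin_cases j
  · exact keyC00 u hu
  · exact keyC01 u hu
  · exact keyC02 u hu
  · exact keyC03 u hu
  · exact keyC04 u hu
  · exact keyC05 u hu
  · exact keyC06 u hu
  · exact keyC10 u hu
  · exact keyC11 u hu
  · exact keyC12 u hu
  · exact keyC13 u hu
  · exact keyC14 u hu
  · exact keyC15 u hu
  · exact keyC16 u hu
  · exact keyC20 u hu
  · exact keyC21 u hu
  · exact keyC22 u hu
  · exact keyC23 u hu
  · exact keyC24 u hu
  · exact keyC25 u hu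
  · exact keyC26 u hu
  · exact keyC30 u hu
  · exact keyC31 u hu
  · exact keyC32 u hu
  · exact keyC33 u hu
  · exact keyC34 u hu
  · exact keyC35 u hu
  · exact keyC36 u hu
  · exact keyC40 u hu
  · exact keyC41 u hu
  · exact keyC42 u hu
  · exact keyC43 u hu
  · exact keyC44 u hu
  · exact keyC45 u hu
  · exact keyC46 u hu
  · exact keyC50 u hu
  · exact keyC51 u hu
  · exact keyC52 u hu
  · exact keyC53 u hu
  · exact keyC54 u hu
  · exact keyC55 u hu
  · exact keyC56 u hu
  · exact keyC60 u hu
  · exact keyC61 u hu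
  · exact keyC62 u hu
  · exact keyC63 u hu
  · exact keyC64 u hu
  · exact keyC65 u hu
  · exact keyC66 u hu


theorem stmt12 (u : ℂ) (hu : ‖u‖ = 1) (v₁ : Submodule.span ℤ (Mset u)) (w : Fin 7) :
    ∃ φ : MoserSpindle ↪g VM u, φ w = v₁ := by
  classical
  have hmem : ∀ i : Fin 7, pt u i ∈ Submodule.span ℤ (Mset u) := by
    intro i
    have h1 : rot angA u ∈ Submodule.span ℤ (Mset u) := Submodule.subset_span (by simp [Mset])
    have h2 : rot angB u ∈ Submodule.span ℤ (Mset u) := Submodule.subset_span (by simp [Mset])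
    have h4 : rot (-angA) u ∈ Submodule.span ℤ (Mset u) := Submodule.subset_span (by simp [Mset])
    have h5 : rot (-angB) u ∈ Submodule.span ℤ (Mset u) := Submodule.subset_span (by simp [Mset])
    rw [pt]
    split_ifs
    · exact Submodule.zero_mem _
    · exact h1
    · exact h2
    · exact Submodule.add_mem _ h1 h2
    · exact Submodule.neg_mem _ h4
    · exact Submodule.neg_mem _ h5
    · exact Submodule.sub_mem _ (Submodule.neg_mem _ h4) h5
  let f : Fin 7 → Submodule.span ℤ (Mset u) := fun i => ⟨pt u i, hmem i⟩
  let F : Fin 7 → Submodule.span ℤ (Mset u) := fun i => f i + (v₁ - f w)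
  have hFd : ∀ i j : Fin 7, (F i : ℂ) - (F j : ℂ) = pt u i - pt u j := by
    intro i j; simp [F, f]
  have hFe : ∀ i j : Fin 7, F i = F j ↔ pt u i - pt u j = 0 := by
    intro i j
    rw [← Subtype.coe_inj, ← sub_eq_zero, hFd]
  refine ⟨⟨⟨F, ?_⟩, ?_⟩, ?_⟩
  · intro i j h
    by_contra hne
    exact (key u hu i j).2 hne ((hFe i j).1 h)
  · intro i j
    simp only [VM, SimpleGraph.fromRel_adj, Function.Embedding.coeFn_mk]
    show F i ≠ F j ∧ ((F i : ℂ) - (F j : ℂ) ∈ Mset u ∨ (F j : ℂ) - (F i : ℂ) ∈ Mset u) ↔ MoserSpindle.Adj i j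
    rw [hFd i j, hFd j i]
    constructor
    · rintro ⟨hne, hm⟩
      exact ((key u hu i j).1).2 hm
    · intro hadj
      refine ⟨?_, ((key u hu i j).1).1 hadj⟩
      intro h
      exact (key u hu i j).2 hadj.ne ((hFe i j).1 h)
  · show F w = v₁
    simp only [F]
    abel
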